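/- For the 3-dimensional Lie algebra example L = L(a₁,a₂), the fundamental tensor F satisfies the para-Sasakian condition F(x,y,z) = −g(φx,φy)η(z) − g(φx,φz)η(y) for all x,y,z ∈ L if and only if a₁ = 0 and a₂ = 1; moreover F vanishes identically if and only if a₁ = a₂ = 0. -/
import Mathlib


open scoped RealInnerProductSpace

noncomputable section

/-- The 3-dimensional Euclidean space underlying the Lie algebra `L(a₁,a₂)`. -/
abbrev E3 : Type := EuclideanSpace ℝ (Fin 3)

/-- The orthonormal basis vectors `E₀`, `E₁`, `E₂`. -/
def eL (i : Fin 3) : E3 := EuclideanSpace.single i 1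

/-- The Lie bracket of `L(a₁,a₂)`:
`[E₀,E₁] = -a₁E₁ - a₂E₂`, `[E₀,E₂] = -a₂E₁ + a₁E₂`, `[E₁,E₂] = 0`. -/
def lieB (a₁ a₂ : ℝ) (x y : E3) : E3 :=
  (x 0 * y 1 - x 1 * y 0) • ((-a₁) • eL 1 + (-a₂) • eL 2)
    + (x 0 * y 2 - x 2 * y 0) • ((-a₂) • eL 1 + a₁ • eL 2)

/-- The endomorphism `φ`: `φE₀ = 0`, `φE₁ = E₂`, `φE₂ = E₁`. -/
def phiL (x : E3) : E3 := x 2 • eL 1 + x 1 • eL 2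

/-- The Reeb vector `ξ = E₀`. -/
def xiL : E3 := eL 0

/-- The 1-form `η`. -/
def etaL (x : E3) : ℝ := x 0

/-- The fundamental tensor `F(x,y,z) = g(∇ₓ(φy) - φ(∇ₓy), z)`. -/
def FL (nabla : E3 → E3 → E3) (x y z : E3) : ℝ :=
  ⟪nabla x (phiL y) - phiL (nabla x y), z⟫

lemma inner3 (u v : E3) : ⟪u, v⟫ = u 0 * v 0 + u 1 * v 1 + u 2 * v 2 := by
  simp [PiLp.inner_apply, Fin.sum_univ_three, RCLike.inner_apply, mul_comm]

lemma eL_apply (i j : Fin 3) : eL i j = if j = i then 1 else 0 := by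
  simp [eL, EuclideanSpace.single_apply]

lemma phiL_apply0 (x : E3) : phiL x 0 = 0 := by
  simp [phiL, eL_apply]
lemma phiL_apply1 (x : E3) : phiL x 1 = x 2 := by
  simp [phiL, eL_apply]
lemma phiL_apply2 (x : E3) : phiL x 2 = x 1 := by
  simp [phiL, eL_apply]

lemma lieB_apply0 (a₁ a₂ : ℝ) (x y : E3) : lieB a₁ a₂ x y 0 = 0 := by
  simp [lieB, eL_apply]
lemma lieB_apply1 (a₁ a₂ : ℝ) (x y : E3) :
    lieB a₁ a₂ x y 1 = (x 0 * y 1 - x 1 * y 0) * (-a₁) + (x 0 * y 2 - x 2 * y 0) * (-a₂) := by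
  simp [lieB, eL_apply]
lemma lieB_apply2 (a₁ a₂ : ℝ) (x y : E3) :
    lieB a₁ a₂ x y 2 = (x 0 * y 1 - x 1 * y 0) * (-a₂) + (x 0 * y 2 - x 2 * y 0) * a₁ := by
  simp [lieB, eL_apply]

lemma FL_eq (a₁ a₂ : ℝ) (nabla : E3 → E3 → E3)
    (hK : ∀ x y z : E3, 2 * ⟪nabla x y, z⟫ =
      ⟪lieB a₁ a₂ x y, z⟫ + ⟪lieB a₁ a₂ z x, y⟫ + ⟪lieB a₁ a₂ z y, x⟫)
    (x y z : E3) :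
    FL nabla x y z =
      -a₂ * (x 1 * y 1 + x 2 * y 2) * z 0 - a₂ * (x 1 * z 1 + x 2 * z 2) * y 0
      + a₁ * (x 2 * y 1 - x 1 * y 2) * z 0 + a₁ * (x 2 * z 1 - x 1 * z 2) * y 0 := by
  have h1 := hK x (phiL y) z
  have h2 := hK x y (phiL z)
  have hsym : ⟪phiL (nabla x y), z⟫ = ⟪nabla x y, phiL z⟫ := by
    rw [inner3, inner3, phiL_apply0, phiL_apply1, phiL_apply2,
      phiL_apply0, phiL_apply1, phiL_apply2]
    ring
  unfold FL
  rw [inner_sub_left, hsym]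
  simp only [inner3, lieB_apply0, lieB_apply1, lieB_apply2,
    phiL_apply0, phiL_apply1, phiL_apply2] at h1 h2 ⊢
  linarith [h1, h2]

/-- `L(a₁,a₂)` is para-Sasakian iff `a₁ = 0` and `a₂ = 1`;
its fundamental tensor vanishes iff `a₁ = a₂ = 0`. -/
theorem statement19 (a₁ a₂ : ℝ) (nabla : E3 → E3 → E3)
    (hK : ∀ x y z : E3, 2 * ⟪nabla x y, z⟫ =
      ⟪lieB a₁ a₂ x y, z⟫ + ⟪lieB a₁ a₂ z x, y⟫ + ⟪lieB a₁ a₂ z y, x⟫) :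
    ((∀ x y z : E3, FL nabla x y z =
        -⟪phiL x, phiL y⟫ * etaL z - ⟪phiL x, phiL z⟫ * etaL y) ↔ (a₁ = 0 ∧ a₂ = 1)) ∧
    ((∀ x y z : E3, FL nabla x y z = 0) ↔ (a₁ = 0 ∧ a₂ = 0)) := by
  have hF := FL_eq a₁ a₂ nabla hK
  constructor
  · constructor
    · intro h
      have h1 := h (eL 1) (eL 2) (eL 0)
      have h2 := h (eL 1) (eL 1) (eL 0)
      rw [hF] at h1 h2
      simp only [inner3, etaL, eL_apply, phiL_apply0, phiL_apply1, phiL_apply2] at h1 h2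
      norm_num [Fin.ext_iff] at h1 h2
      constructor <;> linarith
    · rintro ⟨rfl, rfl⟩
      intro x y z
      rw [hF, inner3, inner3, etaL, etaL, phiL_apply0, phiL_apply1, phiL_apply2,
        phiL_apply0, phiL_apply1, phiL_apply2, phiL_apply0, phiL_apply1, phiL_apply2]
      ring
  · constructor
    · intro h
      have h1 := h (eL 1) (eL 2) (eL 0)
      have h2 := h (eL 1) (eL 1) (eL 0)
      rw [hF] at h1 h2
      simp only [eL_apply] at h1 h2
      norm_num [Fin.ext_iff] at h1 h2
      exact ⟨h1, h2⟩
    · rintro ⟨rfl, rfl⟩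
      intro x y z
      rw [hF]
      ring
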